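/- With the notation of the topological state derivative: if additionally $(\alpha_n)$ is a sequence in the box $\mathcal{B}_{a,b} = \{x \in \mathbf{R}^M : a \le x \le b\}$ converging to $\alpha \in \mathcal{B}_{a,b}$, and $\varepsilon_n \searrow 0$, then the solutions $U_{\varepsilon_n}^{(n)} \in L^p(\Omega)$ of $\int_\Omega U_{\varepsilon_n}^{(n)} v\, dx = \frac{1}{|\omega_{\varepsilon_n}|}\int_{\omega_{\varepsilon_n}} ((\alpha_n)_i - (\alpha_n)_j)\nabla z_v \cdot n\, dS$ converge weakly in $L^p(\Omega)$, $p \in [1,\frac{d}{d-1})$, to the unique $U$ with $\int_\Omega U v\, dx = (\alpha_i - \alpha_j)\nabla z_v(x_0)\cdot n(x_0)$ for all $v \in L^{p'}(\Omega)$. -/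

import Mathlib

open MeasureTheory ENNReal Filter Topology BoundedContinuousFunction

/-- Topological state derivative with varying control values: if `α_n` is a sequence in
the box `𝓑_{a,b} ⊂ ℝ^M` converging to `α ∈ 𝓑_{a,b}` and `ε_n ↘ 0`, then the solutions
`U_n` of `∫ U_n v = |ω_{ε_n}|⁻¹ ∫_{ω_{ε_n}} ((α_n)_i - (α_n)_j) ∇z_v·n dS` converge
weakly in `L^p(Ω)`, `p ∈ [1, d/(d-1))`, to the unique `U` with
`∫ U v = (α_i - α_j) ∇z_v(x₀)·n(x₀)` for all `v ∈ L^{p'}(Ω)`.  Setting as in the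
topological state derivative theorem: `(Γ, ν)` models `∂Ω`, `T` models `v ↦ ∇z_v·n`. -/
theorem stmt_9 {Ω Γ : Type*} [MeasurableSpace Ω] [MetricSpace Γ] [CompactSpace Γ]
    [MeasurableSpace Γ] [OpensMeasurableSpace Γ]
    (μ : Measure Ω) (ν : Measure Γ) [IsFiniteMeasure ν]
    (d : ℕ) (hd : 2 ≤ d)
    (p p' : ℝ≥0∞) (hp1 : 1 ≤ p) (hpd : p < (d : ℝ≥0∞) / ((d : ℝ≥0∞) - 1))
    (hconj : 1 / p + 1 / p' = 1) [Fact (1 ≤ p)] [Fact (1 ≤ p')]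
    (T : Lp ℝ p' μ →L[ℝ] (Γ →ᵇ ℝ))
    (x₀ : Γ) (ω : ℝ → Set Γ)
    (hmem : ∀ ε > (0:ℝ), x₀ ∈ ω ε)
    (hmeas : ∀ ε > (0:ℝ), MeasurableSet (ω ε))
    (hpos : ∀ ε > (0:ℝ), 0 < ν (ω ε)) (hfin : ∀ ε > (0:ℝ), ν (ω ε) < ⊤)
    (hdiam : Tendsto (fun ε => Metric.diam (ω ε)) (𝓝[>] (0:ℝ)) (𝓝 0))
    (M : ℕ) (a b : Fin M → ℝ) (i j : Fin M)
    (αn : ℕ → Fin M → ℝ) (α : Fin M → ℝ)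
    (hαnbox : ∀ n k, a k ≤ αn n k ∧ αn n k ≤ b k)
    (hαbox : ∀ k, a k ≤ α k ∧ α k ≤ b k)
    (hαconv : ∀ k, Tendsto (fun n => αn n k) atTop (𝓝 (α k)))
    (εn : ℕ → ℝ) (hεpos : ∀ n, 0 < εn n) (hεlim : Tendsto εn atTop (𝓝 0))
    (U : ℕ → Lp ℝ p μ)
    (hU : ∀ n, ∀ v : Lp ℝ p' μ,
      ∫ x, U n x * v x ∂μ
        = (ν (ω (εn n))).toReal⁻¹ * ∫ y in ω (εn n), (αn n i - αn n j) * T v y ∂ν)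
    (Ulim : Lp ℝ p μ)
    (hUlim : ∀ v : Lp ℝ p' μ, ∫ x, Ulim x * v x ∂μ = (α i - α j) * T v x₀)
    (hUuniq : ∀ U' : Lp ℝ p μ,
      (∀ v : Lp ℝ p' μ, ∫ x, U' x * v x ∂μ = (α i - α j) * T v x₀) → U' = Ulim) :
    ∀ v : Lp ℝ p' μ,
      Tendsto (fun n => ∫ x, U n x * v x ∂μ) atTop (𝓝 (∫ x, Ulim x * v x ∂μ)) := by
  intro v
  have hTv : UniformContinuous (T v : Γ → ℝ) :=
    CompactSpace.uniformContinuous_of_continuous (T v).continuous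
  have hdiam' : Tendsto (fun n => Metric.diam (ω (εn n))) atTop (𝓝 0) :=
    hdiam.comp (tendsto_nhdsWithin_of_tendsto_nhds_of_eventually_within εn hεlim
      (Filter.Eventually.of_forall fun n => hεpos n))
  have hνpos : ∀ n, 0 < (ν (ω (εn n))).toReal := fun n =>
    ENNReal.toReal_pos (hpos _ (hεpos n)).ne' (hfin _ (hεpos n)).ne
  have hint : ∀ n, IntegrableOn (fun y => T v y) (ω (εn n)) ν := fun n =>
    ((T v).integrable ν).integrableOn
  have havg : Tendsto (fun n => (ν (ω (εn n))).toReal⁻¹ * ∫ y in ω (εn n), T v y ∂ν)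
      atTop (𝓝 (T v x₀)) := by
    rw [Metric.tendsto_atTop]
    intro δ hδ
    obtain ⟨η, hη, hηδ⟩ := Metric.uniformContinuous_iff.mp hTv (δ/2) (by linarith)
    obtain ⟨N, hN⟩ := (hdiam'.eventually_lt_const hη).exists_forall_of_atTop
    refine ⟨N, fun n hn => ?_⟩
    have hd : ∀ y ∈ ω (εn n), ‖T v y - T v x₀‖ ≤ δ/2 := by
      intro y hy
      have hb : Bornology.IsBounded (ω (εn n)) := Metric.isBounded_of_compactSpace
      have h1 : dist y x₀ < η :=
        lt_of_le_of_lt (Metric.dist_le_diam_of_mem hb hy (hmem _ (hεpos n))) (hN n hn)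
      have := hηδ h1
      rw [Real.dist_eq] at this
      simpa using this.le
    have hbound : ‖∫ y in ω (εn n), (T v y - T v x₀) ∂ν‖
        ≤ δ/2 * (ν (ω (εn n))).toReal :=
      norm_setIntegral_le_of_norm_le_const (hfin _ (hεpos n)) hd
    have hsub : ∫ y in ω (εn n), (T v y - T v x₀) ∂ν
        = (∫ y in ω (εn n), T v y ∂ν) - (ν (ω (εn n))).toReal * T v x₀ := by
      rw [integral_sub (hint n) (integrableOn_const (hfin _ (hεpos n)).ne),
        setIntegral_const, smul_eq_mul, Measure.real]
    have hne : (ν (ω (εn n))).toReal ≠ 0 := (hνpos n).ne'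
    have hdist : dist ((ν (ω (εn n))).toReal⁻¹ * ∫ y in ω (εn n), T v y ∂ν) (T v x₀)
        = (ν (ω (εn n))).toReal⁻¹ * ‖∫ y in ω (εn n), (T v y - T v x₀) ∂ν‖ := by
      have h2 : (ν (ω (εn n))).toReal⁻¹ * (∫ y in ω (εn n), T v y ∂ν) - T v x₀
          = (ν (ω (εn n))).toReal⁻¹ *
            ((∫ y in ω (εn n), T v y ∂ν) - (ν (ω (εn n))).toReal * T v x₀) := by
        field_simp
      rw [Real.dist_eq, hsub, Real.norm_eq_abs, h2, abs_mul,
        abs_of_pos (inv_pos.2 (hνpos n))]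
    rw [hdist]
    calc (ν (ω (εn n))).toReal⁻¹ * ‖∫ y in ω (εn n), (T v y - T v x₀) ∂ν‖
        ≤ (ν (ω (εn n))).toReal⁻¹ * (δ/2 * (ν (ω (εn n))).toReal) :=
          mul_le_mul_of_nonneg_left hbound (inv_pos.2 (hνpos n)).le
      _ = δ/2 := by field_simp
      _ < δ := by linarith
  have heq : (fun n => ∫ x, U n x * v x ∂μ)
      = fun n => (αn n i - αn n j) *
          ((ν (ω (εn n))).toReal⁻¹ * ∫ y in ω (εn n), T v y ∂ν) := by
    funext n
    rw [hU n v, integral_const_mul]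
    ring
  rw [heq, hUlim v]
  exact ((hαconv i).sub (hαconv j)).mul havg
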